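/- Any subset A of the Hamming cube {0,1}^d whose Hamming diameter is at most 2t, where 2t ≤ d-1, has cardinality at most ∑_{i=0}^{t} C(d,i). (Kleitman's theorem, even diameter case.) -/

import Mathlib

open Finset

namespace Klei

-- symmDiff identity lemmas assumed from k1 (will merge); restate here
lemma sdL1 (j : ℕ) (X Y : Finset ℕ) : symmDiff (X.erase j) (Y.erase j) = (symmDiff X Y).erase j := by
  ext x; by_cases h : x = j <;> simp [mem_symmDiff, mem_erase, h] <;> tauto

lemma sdL2 {X Y : Finset ℕ} {j : ℕ} (hX : j ∈ X) (hY : j ∈ Y) :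
    symmDiff (X.erase j) Y = symmDiff X (Y.erase j) := by
  ext x; by_cases h : x = j <;> simp [mem_symmDiff, mem_erase, h] <;> tauto

lemma sdL3 {X Y : Finset ℕ} {i j : ℕ} (hij : i ≠ j) (hX : j ∈ X) (hY : j ∈ Y) (hiX : i ∉ X) (hiY : i ∉ Y) :
    symmDiff (insert i (X.erase j)) (insert i (Y.erase j)) = symmDiff X Y := by
  ext x; by_cases h : x = j <;> by_cases h' : x = i <;>
    simp [mem_symmDiff, mem_erase, mem_insert, h, h'] <;> simp_all <;> tauto

lemma sdL4 {X Y : Finset ℕ} {i j : ℕ} (hij : i ≠ j) (hX : j ∈ X) (hY : j ∈ Y) (hiX : i ∉ X) (hiY : i ∉ Y) :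
    symmDiff (insert i (X.erase j)) Y = symmDiff X (insert i (Y.erase j)) := by
  ext x; by_cases h : x = j <;> by_cases h' : x = i <;>
    simp [mem_symmDiff, mem_erase, mem_insert, h, h'] <;> simp_all <;> tauto

lemma sdL5 {X Y : Finset ℕ} {i j : ℕ} (hij : i ≠ j) (hX : j ∈ X) (hiX : i ∉ X) (hY : j ∉ Y) (hiY : i ∉ Y) :
    symmDiff (insert i (X.erase j)) Y = insert i ((symmDiff X Y).erase j) := by
  ext x; by_cases h : x = j <;> by_cases h' : x = i <;>
    simp [mem_symmDiff, mem_erase, mem_insert, h, h'] <;> simp_all <;> tauto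

lemma sdL6 {X Y : Finset ℕ} {i j : ℕ} (hij : i ≠ j) (hX : j ∈ X) (hiX : i ∉ X) (hY : j ∉ Y) (hiY : i ∈ Y) :
    symmDiff (insert i (X.erase j)) Y = ((symmDiff X Y).erase j).erase i := by
  ext x; by_cases h : x = j <;> by_cases h' : x = i <;>
    simp [mem_symmDiff, mem_erase, mem_insert, h, h'] <;> simp_all <;> tauto

lemma sdL7 {X Y : Finset ℕ} {i j : ℕ} (hij : i ≠ j) (hX : j ∈ X) (hiX : i ∉ X) (hY : j ∈ Y) (hiY : i ∈ Y) :
    symmDiff (insert i (X.erase j)) Y = insert j ((symmDiff X Y).erase i) := by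
  ext x; by_cases h : x = j <;> by_cases h' : x = i <;>
    simp [mem_symmDiff, mem_erase, mem_insert, h, h'] <;> simp_all <;> tauto


def Grounded (n : ℕ) (E : Finset (Finset ℕ)) : Prop := ∀ X ∈ E, X ⊆ range n
def DownClosed (E : Finset (Finset ℕ)) : Prop := ∀ X ∈ E, ∀ x, X.erase x ∈ E
def Shifted (E : Finset (Finset ℕ)) : Prop :=
  ∀ X ∈ E, ∀ j ∈ X, ∀ i, i < j → i ∉ X → insert i (X.erase j) ∈ E

def nbhd (n : ℕ) (E : Finset (Finset ℕ)) : Finset (Finset ℕ) :=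
  E ∪ E.biUnion fun X => (range n).image fun i => insert i X

lemma mem_nbhd {n : ℕ} {E : Finset (Finset ℕ)} {Y : Finset ℕ} :
    Y ∈ nbhd n E ↔ Y ∈ E ∨ ∃ X ∈ E, ∃ i < n, Y = insert i X := by
  simp only [nbhd, mem_union, mem_biUnion, mem_image, mem_range]
  constructor
  · rintro (h | ⟨X, hX, i, hi, rfl⟩)
    · exact Or.inl h
    · exact Or.inr ⟨X, hX, i, hi, rfl⟩
  · rintro (h | ⟨X, hX, i, hi, rfl⟩)
    · exact Or.inl h
    · exact Or.inr ⟨X, hX, i, hi, rfl⟩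

lemma subset_nbhd {n : ℕ} {E : Finset (Finset ℕ)} : E ⊆ nbhd n E :=
  subset_union_left

lemma grounded_nbhd {n : ℕ} {E : Finset (Finset ℕ)} (h : Grounded n E) :
    Grounded n (nbhd n E) := by
  intro Y hY
  rcases mem_nbhd.1 hY with h' | ⟨X, hX, i, hi, rfl⟩
  · exact h _ h'
  · exact insert_subset (mem_range.2 hi) (h _ hX)

lemma downClosed_nbhd {n : ℕ} {E : Finset (Finset ℕ)} (h : DownClosed E) :
    DownClosed (nbhd n E) := by
  intro Y hY x
  rcases mem_nbhd.1 hY with h' | ⟨X, hX, i, hi, rfl⟩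
  · exact subset_nbhd (h _ h' x)
  · by_cases hxi : x = i
    · subst hxi
      by_cases hx : x ∈ X
      · rw [insert_eq_self.2 hx]; exact subset_nbhd (h _ hX x)
      · rw [erase_insert hx]; exact subset_nbhd hX
    · rw [erase_insert_of_ne (fun h => hxi h.symm)]
      exact mem_nbhd.2 (Or.inr ⟨X.erase x, h _ hX x, i, hi, rfl⟩)

lemma shifted_nbhd {n : ℕ} {E : Finset (Finset ℕ)} (h : Shifted E) :
    Shifted (nbhd n E) := by
  intro Y hY j hj i hij hiY
  rcases mem_nbhd.1 hY with h' | ⟨X, hX, a, ha, rfl⟩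
  · exact subset_nbhd (h _ h' j hj i hij hiY)
  · by_cases haj : a = j
    · subst haj
      by_cases haX : a ∈ X
      · rw [insert_eq_self.2 haX] at hj hiY ⊢
        exact subset_nbhd (h _ hX a hj i hij hiY)
      · rw [erase_insert haX]
        exact mem_nbhd.2 (Or.inr ⟨X, hX, i, lt_trans hij ha, rfl⟩)
    · have hjX : j ∈ X := by
        rcases mem_insert.1 hj with h1 | h1
        · exact absurd h1.symm haj
        · exact h1
      have hiX : i ∉ X := fun hc => hiY (mem_insert_of_mem hc)
      have hia : i ≠ a := by rintro rfl; exact hiY (mem_insert_self _ _)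
      have := h _ hX j hjX i hij hiX
      refine mem_nbhd.2 (Or.inr ⟨insert i (X.erase j), this, a, ha, ?_⟩)
      rw [erase_insert_of_ne haj, Finset.insert_comm]

lemma mem_of_subset_dc {E : Finset (Finset ℕ)} (hD : DownClosed E) :
    ∀ Z : Finset ℕ, Z ∈ E → ∀ X ⊆ Z, X ∈ E := by
  intro Z
  induction Z using Finset.strongInduction with
  | _ Z ih =>
    intro hZ X hXZ
    by_cases h : Z ⊆ X
    · have hxz : X = Z := Finset.Subset.antisymm hXZ h
      rw [hxz]; exact hZ
    · obtain ⟨z, hzZ, hzX⟩ := not_subset.1 h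
      exact ih (Z.erase z) (erase_ssubset hzZ) (hD _ hZ z)
        X (subset_erase.2 ⟨hXZ, hzX⟩)

lemma bsum_succ (m : ℕ) : ∀ j : ℕ,
    ∑ i ∈ range (j+1), (m+1).choose i
      = ∑ i ∈ range (j+1), m.choose i + ∑ i ∈ range j, m.choose i := by
  intro j
  induction j with
  | zero => simp
  | succ j ih =>
    rw [sum_range_succ, ih, Nat.choose_succ_succ]
    rw [sum_range_succ (fun i => m.choose i) (j+1), sum_range_succ (fun i => m.choose i) j]
    ring

lemma sum_range_choose_lt (n : ℕ) : ∑ i ∈ range n, n.choose i = 2 ^ n - 1 := by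
  have h := Nat.sum_range_choose n
  rw [sum_range_succ, Nat.choose_self] at h
  omega

lemma expand : ∀ n : ℕ, ∀ j : ℕ, j + 1 ≤ n → ∀ E : Finset (Finset ℕ),
    Grounded n E → DownClosed E → Shifted E →
    1 + ∑ i ∈ range j, n.choose i ≤ E.card →
    1 + ∑ i ∈ range (j+1), n.choose i ≤ (nbhd n E).card := by
  intro n
  induction n with
  | zero => intro j hj; omega
  | succ m ihm =>
    intro j hj E hG hD hS hcard
    by_cases htop : j + 1 = m + 1
    -- top case: nbhd is everything
    · have hjem : j = m := by omega
      subst hjem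
      have hpow : powerset (range (j+1)) ⊆ nbhd (j+1) E := by
        intro Y hY
        rw [mem_powerset] at hY
        by_contra hYn
        have hYE : Y ∉ E := fun h => hYn (subset_nbhd h)
        have hYer : ∀ x ∈ Y, Y.erase x ∉ E := by
          intro x hx hc
          exact hYn (mem_nbhd.2 (Or.inr ⟨Y.erase x, hc, x, mem_range.1 (hY hx),
            (insert_erase hx).symm⟩))
        -- the n+2辅 sets range \ ≤1 element are not in E
        set S : Finset (Finset ℕ) :=
          insert (range (j+1)) ((range (j+1)).image fun x => (range (j+1)).erase x) with hSdef
        have hSnotE : ∀ Z ∈ S, Z ∉ E := by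
          intro Z hZ
          rw [hSdef, mem_insert, mem_image] at hZ
          rcases hZ with rfl | ⟨x, hx, rfl⟩
          · exact fun h => hYE (mem_of_subset_dc hD _ h Y hY)
          · by_cases hxY : x ∈ Y
            · exact fun h => hYer x hxY
                (mem_of_subset_dc hD _ h _ (erase_subset_erase _ hY))
            · exact fun h => hYE (mem_of_subset_dc hD _ h Y
                (subset_erase.2 ⟨hY, hxY⟩))
        have hScard : S.card = j + 2 := by
          rw [hSdef, card_insert_of_notMem, card_image_of_injOn, card_range]
          · intro a ha b hb hab
            dsimp only at hab
            by_contra hne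
            have : a ∈ (range (j+1)).erase b := mem_erase.2 ⟨hne, ha⟩
            rw [← hab] at this
            exact (notMem_erase a _) this
          · intro hc
            rw [mem_image] at hc
            obtain ⟨x, hx, hc⟩ := hc
            have := card_erase_of_mem hx
            rw [hc, card_range] at this
            omega
        have hSP : S ⊆ powerset (range (j+1)) := by
          intro Z hZ
          rw [hSdef, mem_insert, mem_image] at hZ
          rcases hZ with rfl | ⟨x, _, rfl⟩
          · exact mem_powerset_self _
          · exact mem_powerset.2 (erase_subset _ _)
        have hEP : E ⊆ powerset (range (j+1)) := fun X hX => mem_powerset.2 (hG X hX)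
        have hdisj : Disjoint S E := by
          rw [disjoint_left]; exact fun Z hZ hZE => hSnotE Z hZ hZE
        have hle : S.card + E.card ≤ 2 ^ (j+1) := by
          have := card_le_card (union_subset hSP hEP)
          rwa [card_union_of_disjoint hdisj, card_powerset, card_range] at this
        have hEcard : 2 ^ (j+1) - 1 - (j+1) + 1 ≤ E.card := by
          have h1 : ∑ i ∈ range (j+1), (j+1).choose i = 2 ^ (j+1) - 1 := sum_range_choose_lt (j+1)
          have h2 : ∑ i ∈ range j, (j+1).choose i = 2 ^ (j+1) - 1 - (j+1) := by
            have := sum_range_succ (fun i => (j+1).choose i) j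
            rw [h1] at this
            have hch : (j+1).choose j = j + 1 := Nat.choose_succ_self_right j
            omega
          omega
        have hp : j + 1 < 2 ^ (j+1) := Nat.lt_two_pow_self
        omega
      have : 2 ^ (j+1) ≤ (nbhd (j+1) E).card := by
        have := card_le_card hpow
        rwa [card_powerset, card_range] at this
      have h1 : ∑ i ∈ range (j+1), (j+1).choose i = 2 ^ (j+1) - 1 := sum_range_choose_lt (j+1)
      have hp2 : 1 ≤ 2 ^ (j+1) := Nat.one_le_two_pow
      omega
    -- now j + 1 < m + 1, i.e. j ≤ m - 1, j + 1 ≤ m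
    · have hjm : j + 1 ≤ m := by omega
      classical
      set E0 : Finset (Finset ℕ) := E.filter (fun X => m ∉ X) with hE0def
      set F1 : Finset (Finset ℕ) := E.filter (fun X => m ∈ X) with hF1def
      set E1 : Finset (Finset ℕ) := F1.image (fun X => X.erase m) with hE1def
      have hinjF : Set.InjOn (fun X : Finset ℕ => X.erase m) ↑F1 := by
        intro X hX Y hY hxy
        dsimp only at hxy
        have hX' : m ∈ X := (mem_filter.1 hX).2
        have hY' : m ∈ Y := (mem_filter.1 hY).2
        rw [← insert_erase hX', ← insert_erase hY', hxy]
      have hcard01 : E.card = E0.card + E1.card := by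
        have h1 := card_filter_add_card_filter_not (s := E) (p := fun X => m ∈ X)
        have h2 : E1.card = F1.card := by rw [hE1def, card_image_of_injOn hinjF]
        have h3 : E.filter (fun X => ¬ m ∈ X) = E0 := hE0def.symm
        have h4 : E.filter (fun X => m ∈ X) = F1 := hF1def.symm
        rw [h3, h4] at h1
        omega
      have hG0 : Grounded m E0 := by
        intro X hX x hx
        have h1 := hG X (mem_filter.1 hX).1 hx
        have h2 : m ∉ X := (mem_filter.1 hX).2
        rw [mem_range] at h1 ⊢
        have : x ≠ m := fun h => h2 (h ▸ hx)
        omega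
      have hG1 : Grounded m E1 := by
        intro X hX x hx
        rw [hE1def, mem_image] at hX
        obtain ⟨Z, hZ, rfl⟩ := hX
        rw [mem_erase] at hx
        have := hG Z (mem_filter.1 hZ).1 hx.2
        rw [mem_range] at this ⊢
        have := hx.1
        omega
      have hD0 : DownClosed E0 := by
        intro X hX x
        rw [hE0def, mem_filter] at hX ⊢
        exact ⟨hD _ hX.1 x, fun hc => hX.2 (mem_of_mem_erase hc)⟩
      have hS0 : Shifted E0 := by
        intro X hX jj hj i hij hiX
        rw [hE0def, mem_filter] at hX ⊢
        refine ⟨hS _ hX.1 jj hj i hij hiX, ?_⟩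
        intro hc
        rcases mem_insert.1 hc with h | h
        · have hjr := hG X hX.1 hj
          rw [mem_range] at hjr
          have hjm' : jj ≠ m := fun hh => hX.2 (hh ▸ hj)
          omega
        · exact hX.2 (mem_of_mem_erase h)
      have hE10 : E1 ⊆ E0 := by
        intro Y hY
        rw [hE1def, mem_image] at hY
        obtain ⟨Z, hZ, rfl⟩ := hY
        rw [hE0def, mem_filter]
        exact ⟨hD _ (mem_filter.1 hZ).1 m, notMem_erase _ _⟩
      have hD1 : DownClosed E1 := by
        intro X hX x
        rw [hE1def, mem_image] at hX
        obtain ⟨Z, hZ, rfl⟩ := hX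
        by_cases hxm : x = m
        · subst hxm
          rw [erase_idem]
          exact mem_image.2 ⟨Z, hZ, rfl⟩
        · rw [erase_right_comm]
          refine mem_image.2 ⟨Z.erase x, mem_filter.2 ⟨hD _ (mem_filter.1 hZ).1 x,
            mem_erase.2 ⟨Ne.symm hxm, (mem_filter.1 hZ).2⟩⟩, rfl⟩
      have hS1 : Shifted E1 := by
        intro X hX jj hjX i hij hiX
        rw [hE1def, mem_image] at hX
        obtain ⟨Z, hZ, rfl⟩ := hX
        have hZE := (mem_filter.1 hZ).1
        have hmZ := (mem_filter.1 hZ).2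
        obtain ⟨hjm', hjZ⟩ := mem_erase.1 hjX
        have hjr := hG Z hZE hjZ
        rw [mem_range] at hjr
        have him : i ≠ m := by omega
        have hiZ : i ∉ Z := fun h => hiX (mem_erase.2 ⟨him, h⟩)
        refine mem_image.2 ⟨insert i (Z.erase jj), mem_filter.2 ⟨hS _ hZE jj hjZ i hij hiZ,
          mem_insert.2 (Or.inr (mem_erase.2 ⟨Ne.symm hjm', hmZ⟩))⟩, ?_⟩
        rw [erase_insert_of_ne him, erase_right_comm]
      have hsub : nbhd m E1 ⊆ E0 := by
        intro Y hY
        rcases mem_nbhd.1 hY with h | ⟨X, hX, i, him, rfl⟩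
        · exact hE10 h
        · rw [hE1def, mem_image] at hX
          obtain ⟨Z, hZ, rfl⟩ := hX
          by_cases hiZ : i ∈ Z.erase m
          · rw [insert_eq_self.2 hiZ]
            exact hE10 (mem_image.2 ⟨Z, hZ, rfl⟩)
          · have hine : i ≠ m := by omega
            have hiZ' : i ∉ Z := fun h => hiZ (mem_erase.2 ⟨hine, h⟩)
            have hmZ := (mem_filter.1 hZ).2
            have hsh := hS _ (mem_filter.1 hZ).1 m hmZ i him hiZ'
            rw [hE0def, mem_filter]
            refine ⟨hsh, ?_⟩
            intro hc
            rcases mem_insert.1 hc with h | h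
            · exact hine h.symm
            · exact (notMem_erase _ _) h
      have hN0 : (nbhd (m+1) E).filter (fun X => m ∉ X) = nbhd m E0 := by
        ext Y
        simp only [mem_filter]
        constructor
        · rintro ⟨hY, hmY⟩
          rcases mem_nbhd.1 hY with h | ⟨X, hX, i, hi, rfl⟩
          · exact subset_nbhd (mem_filter.2 ⟨h, hmY⟩)
          · have him : i ≠ m := fun h => hmY (h ▸ mem_insert_self _ _)
            have hmX : m ∉ X := fun h => hmY (mem_insert_of_mem h)
            exact mem_nbhd.2 (Or.inr ⟨X, mem_filter.2 ⟨hX, hmX⟩, i, by omega, rfl⟩)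
        · intro hY
          rcases mem_nbhd.1 hY with h | ⟨X, hX, i, hi, rfl⟩
          · exact ⟨subset_nbhd (mem_filter.1 h).1, (mem_filter.1 h).2⟩
          · obtain ⟨hXE, hmX⟩ := mem_filter.1 hX
            refine ⟨mem_nbhd.2 (Or.inr ⟨X, hXE, i, by omega, rfl⟩), ?_⟩
            intro hc
            rcases mem_insert.1 hc with h | h
            · omega
            · exact hmX h
      have hN1 : ((nbhd (m+1) E).filter (fun X => m ∈ X)).image (fun X => X.erase m) = E0 := by
        ext W
        simp only [mem_image, mem_filter]
        constructor
        · rintro ⟨Y, ⟨hY, hmY⟩, rfl⟩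
          rcases mem_nbhd.1 hY with h | ⟨X, hX, i, hi, rfl⟩
          · exact mem_filter.2 ⟨hD _ h m, notMem_erase _ _⟩
          · by_cases him : i = m
            · subst him
              by_cases hiX : i ∈ X
              · rw [insert_eq_self.2 hiX]
                exact mem_filter.2 ⟨hD _ hX i, notMem_erase _ _⟩
              · rw [erase_insert hiX]
                exact mem_filter.2 ⟨hX, hiX⟩
            · have hmX : m ∈ X := by
                rcases mem_insert.1 hmY with h | h
                · exact absurd h.symm him
                · exact h
              by_cases hiX : i ∈ X
              · rw [insert_eq_self.2 hiX]
                exact mem_filter.2 ⟨hD _ hX m, notMem_erase _ _⟩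
              · rw [erase_insert_of_ne him]
                refine mem_filter.2 ⟨hS _ hX m hmX i (by omega) hiX, ?_⟩
                intro hc
                rcases mem_insert.1 hc with h | h
                · exact him h.symm
                · exact (notMem_erase _ _) h
        · intro hW
          refine ⟨insert m W, ⟨mem_nbhd.2 (Or.inr ⟨W, (mem_filter.1 hW).1, m, by omega, rfl⟩),
            mem_insert_self _ _⟩, erase_insert (mem_filter.1 hW).2⟩
      have hNcard : (nbhd (m+1) E).card = (nbhd m E0).card + E0.card := by
        have h1 := card_filter_add_card_filter_not (s := nbhd (m+1) E) (p := fun X => m ∈ X)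
        have hinj2 : Set.InjOn (fun X : Finset ℕ => X.erase m)
            ↑((nbhd (m+1) E).filter (fun X => m ∈ X)) := by
          intro X hX Y hY hxy
          dsimp only at hxy
          have hX' : m ∈ X := (mem_filter.1 hX).2
          have hY' : m ∈ Y := (mem_filter.1 hY).2
          rw [← insert_erase hX', ← insert_erase hY', hxy]
        have h2 : ((nbhd (m+1) E).filter (fun X => m ∈ X)).card = E0.card := by
          rw [← hN1, card_image_of_injOn hinj2]
        rw [← hN0]
        omega
      by_cases hcase : 1 + ∑ i ∈ range j, m.choose i ≤ E0.card
      · have hIH := ihm j hjm E0 hG0 hD0 hS0 hcase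
        have hb := bsum_succ m j
        omega
      · push_neg at hcase
        rcases Nat.eq_zero_or_pos j with hj0 | hjpos
        · subst hj0
          have h1 : E1.card ≤ E0.card := card_le_card hE10
          simp only [range_zero, sum_empty, add_zero] at hcard hcase
          omega
        · obtain ⟨jj, rfl⟩ : ∃ jj, j = jj + 1 := ⟨j - 1, by omega⟩
          have hb1 := bsum_succ m jj
          have hE1card : 1 + ∑ i ∈ range jj, m.choose i ≤ E1.card := by omega
          have hIH1 := ihm jj (by omega) E1 hG1 hD1 hS1 hE1card
          have hle2 := card_le_card hsub
          omega

-- compression operations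
def mvOp (j : ℕ) (o : Option ℕ) (X : Finset ℕ) : Finset ℕ :=
  match o with
  | none => X.erase j
  | some i => insert i (X.erase j)

def aOp (j : ℕ) (o : Option ℕ) (X : Finset ℕ) : Prop :=
  match o with
  | none => j ∈ X
  | some i => j ∈ X ∧ i < j ∧ i ∉ X

instance declApp (j : ℕ) (o : Option ℕ) (X : Finset ℕ) : Decidable (aOp j o X) := by
  cases o <;> dsimp [aOp] <;> infer_instance

def cOp (j : ℕ) (o : Option ℕ) (A : Finset (Finset ℕ)) : Finset (Finset ℕ) :=
  A.filter (fun X => ¬ aOp j o X ∨ mvOp j o X ∈ A)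
    ∪ (A.filter fun X => aOp j o X ∧ mvOp j o X ∉ A).image (mvOp j o)

lemma mv_recover {j : ℕ} {o : Option ℕ} {X : Finset ℕ} (h : aOp j o X) :
    X = match o with
        | none => insert j (mvOp j o X)
        | some i => insert j ((mvOp j o X).erase i) := by
  cases o with
  | none => simp only [mvOp]; rw [insert_erase h]
  | some i =>
    obtain ⟨hjX, hij, hiX⟩ := h
    simp only [mvOp]
    rw [erase_insert (fun hc => hiX (mem_of_mem_erase hc)), insert_erase hjX]

lemma mv_injOn {j : ℕ} {o : Option ℕ} {s : Finset (Finset ℕ)}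
    (hs : ∀ X ∈ s, aOp j o X) : Set.InjOn (mvOp j o) ↑s := by
  intro X hX Y hY hxy
  have h1 := mv_recover (hs X hX)
  have h2 := mv_recover (hs Y hY)
  cases o with
  | none => rw [h1, h2, hxy]
  | some i => rw [h1, h2, hxy]

lemma cmp_filters (j : ℕ) (o : Option ℕ) (A : Finset (Finset ℕ)) :
    A.filter (fun X => ¬ aOp j o X ∨ mvOp j o X ∈ A)
      = A.filter (fun X => ¬ (aOp j o X ∧ mvOp j o X ∉ A)) := by
  apply filter_congr
  intro X _
  constructor
  · rintro (h | h) ⟨h1, h2⟩ <;> tauto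
  · intro h
    by_cases h1 : aOp j o X
    · by_cases h2 : mvOp j o X ∈ A
      · exact Or.inr h2
      · exact absurd ⟨h1, h2⟩ h
    · exact Or.inl h1

lemma cmp_disj (j : ℕ) (o : Option ℕ) (A : Finset (Finset ℕ)) :
    Disjoint (A.filter (fun X => ¬ aOp j o X ∨ mvOp j o X ∈ A))
      ((A.filter fun X => aOp j o X ∧ mvOp j o X ∉ A).image (mvOp j o)) := by
  rw [disjoint_right]
  intro Z hZ hZ'
  rw [mem_image] at hZ
  obtain ⟨X, hX, rfl⟩ := hZ
  exact (mem_filter.1 hX).2.2 (mem_filter.1 hZ').1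

lemma card_cmp (j : ℕ) (o : Option ℕ) (A : Finset (Finset ℕ)) :
    (cOp j o A).card = A.card := by
  rw [cOp, card_union_of_disjoint (cmp_disj j o A),
    card_image_of_injOn (mv_injOn (fun X hX => (mem_filter.1 hX).2.1)), cmp_filters]
  have := card_filter_add_card_filter_not (s := A)
    (p := fun X => aOp j o X ∧ mvOp j o X ∉ A)
  omega

lemma grounded_cmp {d j : ℕ} {o : Option ℕ} {A : Finset (Finset ℕ)} (hG : Grounded d A) :
    Grounded d (cOp j o A) := by
  intro Z hZ
  rw [cOp, mem_union] at hZ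
  rcases hZ with h | h
  · exact hG _ (mem_filter.1 h).1
  · rw [mem_image] at h
    obtain ⟨X, hX, rfl⟩ := h
    have hXA := (mem_filter.1 hX).1
    have happ := (mem_filter.1 hX).2.1
    cases o with
    | none => exact (erase_subset _ _).trans (hG _ hXA)
    | some i =>
      obtain ⟨hjX, hij, _⟩ := happ
      have hjr := hG _ hXA hjX
      rw [mem_range] at hjr
      exact insert_subset (mem_range.2 (by omega)) ((erase_subset _ _).trans (hG _ hXA))



lemma mem_cmp {j : ℕ} {o : Option ℕ} {A : Finset (Finset ℕ)} {Z : Finset ℕ} :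
    Z ∈ cOp j o A ↔ (Z ∈ A ∧ (¬ aOp j o Z ∨ mvOp j o Z ∈ A))
      ∨ ∃ X ∈ A, aOp j o X ∧ mvOp j o X ∉ A ∧ Z = mvOp j o X := by
  rw [cOp, mem_union, mem_filter, mem_image]
  constructor
  · rintro (⟨h1, h2⟩ | h)
    · exact Or.inl ⟨h1, h2⟩
    · obtain ⟨X, hX, rfl⟩ := h
      obtain ⟨hXA, h1, h2⟩ := mem_filter.1 hX
      exact Or.inr ⟨X, hXA, h1, h2, rfl⟩
  · rintro (⟨h1, h2⟩ | ⟨X, hXA, h1, h2, rfl⟩)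
    · exact Or.inl ⟨h1, h2⟩
    · exact Or.inr ⟨X, mem_filter.2 ⟨hXA, h1, h2⟩, rfl⟩

-- the core single-sided estimate: Z = mvOp X moved, Y kept
lemma cmp_diam_aux {j : ℕ} {o : Option ℕ} {A : Finset (Finset ℕ)} {X Y : Finset ℕ}
    (hX : X ∈ A) (happX : aOp j o X) (hY : Y ∈ A) (hkeep : ¬ aOp j o Y ∨ mvOp j o Y ∈ A) :
    ∃ X0 ∈ A, ∃ Y0 ∈ A, (symmDiff (mvOp j o X) Y).card ≤ (symmDiff X0 Y0).card := by
  cases o with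
  | none =>
    simp only [aOp] at happX
    by_cases hjY : j ∈ Y
    · have hmvY : Y.erase j ∈ A := by
        rcases hkeep with h | h
        · exact absurd hjY h
        · exact h
      refine ⟨X, hX, Y.erase j, hmvY, ?_⟩
      rw [show mvOp j none X = X.erase j from rfl, sdL2 happX hjY]
    · refine ⟨X, hX, Y, hY, ?_⟩
      have heq : symmDiff (X.erase j) Y = (symmDiff X Y).erase j := by
        conv_lhs => rw [← erase_eq_of_notMem hjY]
        exact sdL1 j X Y
      rw [show mvOp j none X = X.erase j from rfl, heq]
      exact card_le_card (erase_subset _ _)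
  | some i =>
    obtain ⟨hjX, hij, hiX⟩ := happX
    have hijne : i ≠ j := by omega
    by_cases happY : aOp j (some i) Y
    · obtain ⟨hjY, _, hiY⟩ := happY
      have hmvY : insert i (Y.erase j) ∈ A := by
        rcases hkeep with h | h
        · exact absurd ⟨hjY, hij, hiY⟩ h
        · exact h
      refine ⟨X, hX, insert i (Y.erase j), hmvY, ?_⟩
      rw [show mvOp j (some i) X = insert i (X.erase j) from rfl, sdL4 hijne hjX hjY hiX hiY]
    · have hYnot : j ∉ Y ∨ i ∈ Y := by
        by_contra hc
        push_neg at hc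
        exact happY ⟨hc.1, hij, hc.2⟩
      refine ⟨X, hX, Y, hY, ?_⟩
      rw [show mvOp j (some i) X = insert i (X.erase j) from rfl]
      by_cases hjY : j ∈ Y
      · have hiY : i ∈ Y := by tauto
        rw [sdL7 hijne hjX hiX hjY hiY]
        have hjsd : j ∉ symmDiff X Y := by simp [mem_symmDiff, hjX, hjY]
        have hisd : i ∈ symmDiff X Y := by simp [mem_symmDiff, hiX, hiY]
        rw [card_insert_of_notMem (fun hc => hjsd (mem_of_mem_erase hc)),
          card_erase_of_mem hisd]
        have : 0 < (symmDiff X Y).card := card_pos.2 ⟨i, hisd⟩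
        omega
      · by_cases hiY : i ∈ Y
        · rw [sdL6 hijne hjX hiX hjY hiY]
          exact card_le_card ((erase_subset _ _).trans (erase_subset _ _))
        · rw [sdL5 hijne hjX hiX hjY hiY]
          have hjsd : j ∈ symmDiff X Y := by simp [mem_symmDiff, hjX, hjY]
          have hisd : i ∉ symmDiff X Y := by simp [mem_symmDiff, hiX, hiY]
          rw [card_insert_of_notMem (fun hc => hisd (mem_of_mem_erase hc)),
            card_erase_of_mem hjsd]
          have : 0 < (symmDiff X Y).card := card_pos.2 ⟨j, hjsd⟩
          omega

lemma cmp_diam {j : ℕ} {o : Option ℕ} {A : Finset (Finset ℕ)} :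
    ∀ Z ∈ cOp j o A, ∀ W ∈ cOp j o A,
      ∃ X ∈ A, ∃ Y ∈ A, (symmDiff Z W).card ≤ (symmDiff X Y).card := by
  intro Z hZ W hW
  rcases mem_cmp.1 hZ with ⟨hZA, hZk⟩ | ⟨X, hXA, happX, hmvX, rfl⟩
  · rcases mem_cmp.1 hW with ⟨hWA, hWk⟩ | ⟨Y, hYA, happY, hmvY, rfl⟩
    · exact ⟨Z, hZA, W, hWA, le_rfl⟩
    · obtain ⟨X0, h0, Y0, h1, hle⟩ := cmp_diam_aux hYA happY hZA hZk
      refine ⟨X0, h0, Y0, h1, ?_⟩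
      rw [symmDiff_comm]
      exact hle
  · rcases mem_cmp.1 hW with ⟨hWA, hWk⟩ | ⟨Y, hYA, happY, hmvY, rfl⟩
    · exact cmp_diam_aux hXA happX hWA hWk
    · -- both moved
      cases o with
      | none =>
        refine ⟨X, hXA, Y, hYA, ?_⟩
        rw [show mvOp j none X = X.erase j from rfl, show mvOp j none Y = Y.erase j from rfl, sdL1]
        exact card_le_card (erase_subset _ _)
      | some i =>
        obtain ⟨hjX, hij, hiX⟩ := happX
        obtain ⟨hjY, _, hiY⟩ := happY
        refine ⟨X, hXA, Y, hYA, ?_⟩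
        rw [show mvOp j (some i) X = insert i (X.erase j) from rfl,
          show mvOp j (some i) Y = insert i (Y.erase j) from rfl,
          sdL3 (by omega : i ≠ j) hjX hjY hiX hiY]

-- measure
def Wt (A : Finset (Finset ℕ)) : ℕ := ∑ X ∈ A, ∑ x ∈ X, (x + 1)

lemma mv_lt {j : ℕ} {o : Option ℕ} {X : Finset ℕ} (h : aOp j o X) :
    ∑ x ∈ mvOp j o X, (x + 1) < ∑ x ∈ X, (x + 1) := by
  cases o with
  | none =>
    simp only [aOp] at h
    have := sum_erase_add X (fun x => x + 1) h
    simp only [mvOp]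
    omega
  | some i =>
    obtain ⟨hjX, hij, hiX⟩ := h
    have h1 := sum_erase_add X (fun x => x + 1) hjX
    have h2 : ∑ x ∈ insert i (X.erase j), (x + 1) = (i + 1) + ∑ x ∈ X.erase j, (x + 1) :=
      sum_insert (fun hc => hiX (mem_of_mem_erase hc))
    simp only [mvOp]
    omega

lemma wt_cmp_lt {j : ℕ} {o : Option ℕ} {A : Finset (Finset ℕ)} {X : Finset ℕ}
    (hX : X ∈ A) (happ : aOp j o X) (hmv : mvOp j o X ∉ A) :
    Wt (cOp j o A) < Wt A := by
  have hne : (A.filter fun X => aOp j o X ∧ mvOp j o X ∉ A).Nonempty :=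
    ⟨X, mem_filter.2 ⟨hX, happ, hmv⟩⟩
  have himg : ∑ Z ∈ (A.filter fun X => aOp j o X ∧ mvOp j o X ∉ A).image (mvOp j o),
        ∑ x ∈ Z, (x + 1)
      = ∑ Z ∈ (A.filter fun X => aOp j o X ∧ mvOp j o X ∉ A), ∑ x ∈ mvOp j o Z, (x + 1) :=
    sum_image (fun x hx y hy hxy =>
      mv_injOn (fun Z hZ => (mem_filter.1 hZ).2.1) (mem_coe.2 hx) (mem_coe.2 hy) hxy)
  have hlt : ∑ Z ∈ (A.filter fun X => aOp j o X ∧ mvOp j o X ∉ A), ∑ x ∈ mvOp j o Z, (x + 1)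
      < ∑ Z ∈ (A.filter fun X => aOp j o X ∧ mvOp j o X ∉ A), ∑ x ∈ Z, (x + 1) :=
    sum_lt_sum_of_nonempty hne (fun Z hZ => mv_lt (mem_filter.1 hZ).2.1)
  have hsplit := sum_filter_add_sum_filter_not A (fun X => aOp j o X ∧ mvOp j o X ∉ A)
    (fun Z : Finset ℕ => ∑ x ∈ Z, (x + 1))
  have hU : Wt (cOp j o A)
      = ∑ Z ∈ A.filter (fun X => ¬ aOp j o X ∨ mvOp j o X ∈ A), ∑ x ∈ Z, (x + 1)
      + ∑ Z ∈ (A.filter fun X => aOp j o X ∧ mvOp j o X ∉ A), ∑ x ∈ mvOp j o Z, (x + 1) := by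
    unfold Wt cOp
    rw [sum_union (cmp_disj j o A), himg]
  have hftr : ∑ Z ∈ A.filter (fun X => ¬ aOp j o X ∨ mvOp j o X ∈ A), ∑ x ∈ Z, (x + 1)
      = ∑ Z ∈ A.filter (fun X => ¬ (aOp j o X ∧ mvOp j o X ∉ A)), ∑ x ∈ Z, (x + 1) := by
    rw [cmp_filters]
  have hW : Wt A = ∑ X ∈ A, ∑ x ∈ X, (x + 1) := rfl
  omega

lemma exists_compressed (d : ℕ) : ∀ N : ℕ, ∀ A : Finset (Finset ℕ), Wt A ≤ N → Grounded d A →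
    ∃ E : Finset (Finset ℕ), Grounded d E ∧ DownClosed E ∧ Shifted E ∧ E.card = A.card ∧
      (∀ Z ∈ E, ∀ W ∈ E, ∃ X ∈ A, ∃ Y ∈ A, (symmDiff Z W).card ≤ (symmDiff X Y).card) := by
  intro N
  induction N using Nat.strong_induction_on with
  | _ N ih =>
    intro A hWt hG
    by_cases hDC : DownClosed A
    · by_cases hSh : Shifted A
      · exact ⟨A, hG, hDC, hSh, rfl, fun Z hZ W hW => ⟨Z, hZ, W, hW, le_rfl⟩⟩
      · -- a shift violation
        unfold Shifted at hSh
        push_neg at hSh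
        obtain ⟨X, hX, j, hjX, i, hij, hiX, hmv⟩ := hSh
        have happ : aOp j (some i) X := ⟨hjX, hij, hiX⟩
        have hlt := wt_cmp_lt hX happ (by exact hmv)
        have hG' := grounded_cmp (j := j) (o := some i) hG
        obtain ⟨E, h1, h2, h3, h4, h5⟩ := ih (Wt (cOp j (some i) A)) (by omega)
          (cOp j (some i) A) le_rfl hG'
        refine ⟨E, h1, h2, h3, by rw [h4, card_cmp], ?_⟩
        intro Z hZ W hW
        obtain ⟨X1, hX1, Y1, hY1, hle1⟩ := h5 Z hZ W hW
        obtain ⟨X2, hX2, Y2, hY2, hle2⟩ := cmp_diam X1 hX1 Y1 hY1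
        exact ⟨X2, hX2, Y2, hY2, le_trans hle1 hle2⟩
    · unfold DownClosed at hDC
      push_neg at hDC
      obtain ⟨X, hX, x, hxe⟩ := hDC
      have hxX : x ∈ X := by
        by_contra hc
        rw [erase_eq_of_notMem hc] at hxe
        exact hxe hX
      have happ : aOp x none X := hxX
      have hlt := wt_cmp_lt hX happ (by exact hxe)
      have hG' := grounded_cmp (j := x) (o := none) hG
      obtain ⟨E, h1, h2, h3, h4, h5⟩ := ih (Wt (cOp x none A)) (by omega)
        (cOp x none A) le_rfl hG'
      refine ⟨E, h1, h2, h3, by rw [h4, card_cmp], ?_⟩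
      intro Z hZ W hW
      obtain ⟨X1, hX1, Y1, hY1, hle1⟩ := h5 Z hZ W hW
      obtain ⟨X2, hX2, Y2, hY2, hle2⟩ := cmp_diam X1 hX1 Y1 hY1
      exact ⟨X2, hX2, Y2, hY2, le_trans hle1 hle2⟩


lemma iter_props {d : ℕ} {E : Finset (Finset ℕ)} (hG : Grounded d E) (hD : DownClosed E)
    (hS : Shifted E) (s : ℕ) :
    Grounded d ((nbhd d)^[s] E) ∧ DownClosed ((nbhd d)^[s] E) ∧ Shifted ((nbhd d)^[s] E) := by
  induction s with
  | zero => exact ⟨hG, hD, hS⟩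
  | succ s ih =>
    rw [Function.iterate_succ_apply']
    exact ⟨grounded_nbhd ih.1, downClosed_nbhd ih.2.1, shifted_nbhd ih.2.2⟩

lemma iter_mem {d : ℕ} {E : Finset (Finset ℕ)} :
    ∀ s : ℕ, ∀ Y ∈ (nbhd d)^[s] E, ∃ X ∈ E, X ⊆ Y ∧ Y.card ≤ X.card + s := by
  intro s
  induction s with
  | zero => exact fun Y hY => ⟨Y, hY, Subset.rfl, by omega⟩
  | succ s ih =>
    rw [Function.iterate_succ_apply']
    intro Y hY
    rcases mem_nbhd.1 hY with h | ⟨Z, hZ, i, _, rfl⟩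
    · obtain ⟨X, hX, h1, h2⟩ := ih Y h
      exact ⟨X, hX, h1, by omega⟩
    · obtain ⟨X, hX, h1, h2⟩ := ih Z hZ
      refine ⟨X, hX, h1.trans (subset_insert _ _), ?_⟩
      have := card_insert_le i Z
      omega

lemma iter_card {d t : ℕ} {E : Finset (Finset ℕ)} (hG : Grounded d E) (hD : DownClosed E)
    (hS : Shifted E) (hcard : 1 + ∑ i ∈ range (t + 1), d.choose i ≤ E.card) :
    ∀ s : ℕ, t + 1 + s ≤ d →
      1 + ∑ i ∈ range (t + 1 + s), d.choose i ≤ ((nbhd d)^[s] E).card := by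
  intro s
  induction s with
  | zero => intro _; simpa using hcard
  | succ s ih =>
    intro hs
    have hprev := ih (by omega)
    obtain ⟨hG', hD', hS'⟩ := iter_props hG hD hS (d := d) s
    have := expand d (t + 1 + s) (by omega) _ hG' hD' hS' hprev
    rw [Function.iterate_succ_apply']
    have hidx : t + 1 + s + 1 = t + 1 + (s + 1) := by omega
    rw [hidx] at this
    exact this

lemma sum_choose_compl {d t : ℕ} (h : t ≤ d) :
    ∑ i ∈ range (d - t), d.choose i + ∑ i ∈ range (t + 1), d.choose i = 2 ^ d := by
  have h2 := Nat.sum_range_choose d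
  have hsplit : ∑ i ∈ Finset.Ico 0 (d - t), d.choose i
      + ∑ i ∈ Finset.Ico (d - t) (d + 1), d.choose i
      = ∑ i ∈ Finset.Ico 0 (d + 1), d.choose i :=
    sum_Ico_consecutive _ (by omega) (by omega)
  have hrefl : ∑ i ∈ Finset.Ico (d - t) (d + 1), d.choose i
      = ∑ i ∈ range (t + 1), d.choose i := by
    refine sum_nbij' (fun i => d - i) (fun k => d - k) ?_ ?_ ?_ ?_ ?_
    · intro a ha
      rw [Finset.mem_Ico] at ha
      rw [mem_range]
      omega
    · intro k hk
      rw [mem_range] at hk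
      rw [Finset.mem_Ico]
      omega
    · intro a ha
      rw [Finset.mem_Ico] at ha
      omega
    · intro k hk
      rw [mem_range] at hk
      omega
    · intro a ha
      rw [Finset.mem_Ico] at ha
      have h9 : a ≤ d := by omega
      rw [Nat.choose_symm h9]
  rw [← Finset.range_eq_Ico, ← Finset.range_eq_Ico] at hsplit
  rw [hrefl] at hsplit
  omega

lemma kleitman_sets {d t : ℕ} (ht : 2 * t + 1 ≤ d) (A : Finset (Finset ℕ))
    (hG : Grounded d A) (hdiam : ∀ X ∈ A, ∀ Y ∈ A, (symmDiff X Y).card ≤ 2 * t) :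
    A.card ≤ ∑ i ∈ range (t + 1), d.choose i := by
  by_contra hlt
  push_neg at hlt
  obtain ⟨E, hGE, hDE, hSE, hcardE, hpairs⟩ := exists_compressed d (Wt A) A le_rfl hG
  have hdiamE : ∀ X ∈ E, ∀ Y ∈ E, (symmDiff X Y).card ≤ 2 * t := by
    intro X hX Y hY
    obtain ⟨X0, h0, Y0, h1, hle⟩ := hpairs X hX Y hY
    exact le_trans hle (hdiam _ h0 _ h1)
  set s : ℕ := d - (2 * t + 1) with hsdef
  set F : Finset (Finset ℕ) := (nbhd d)^[s] E with hFdef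
  have hcardF : 1 + ∑ i ∈ range (t + 1 + s), d.choose i ≤ F.card :=
    iter_card hGE hDE hSE (by omega) s (by omega)
  have hGF : Grounded d F := (iter_props hGE hDE hSE s).1
  have hidx : t + 1 + s = d - t := by omega
  -- separation
  have hsep : ∀ Z ∈ E, (range d) \ Z ∉ F := by
    intro Z hZ hc
    obtain ⟨X, hXE, hsub2, hcard2⟩ := iter_mem s _ hc
    have hdisj : Disjoint X Z := by
      rw [disjoint_left]
      intro a haX haZ
      exact (mem_sdiff.1 (hsub2 haX)).2 haZ
    have hsd : (symmDiff X Z).card = X.card + Z.card := by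
      rw [symmDiff_eq_sup_sdiff_inf]
      have hinf : X ⊓ Z = ∅ := by
        rw [← disjoint_iff_inter_eq_empty.1 hdisj]
        rfl
      rw [hinf]
      have : (X ⊔ Z : Finset ℕ) = X ∪ Z := rfl
      rw [this]
      simp [card_union_of_disjoint hdisj]
    have hZsub : Z ⊆ range d := hGE _ hZ
    have h1 : ((range d) \ Z).card = d - Z.card := by
      rw [card_sdiff_of_subset hZsub, card_range]
    have h2 := hdiamE X hXE Z hZ
    have h3 : Z.card ≤ d := by
      have := card_le_card hZsub
      rwa [card_range] at this
    omega
  have hEG : Grounded d E := hGE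
  have hinj : Set.InjOn (fun Z : Finset ℕ => (range d) \ Z) ↑E := by
    intro X hX Y hY hxy
    dsimp only at hxy
    have hX' : X ⊆ range d := hEG _ (mem_coe.1 hX)
    have hY' : Y ⊆ range d := hEG _ (mem_coe.1 hY)
    have e1 : range d \ (range d \ X) = X := by
      rw [sdiff_sdiff_self_left]
      exact inf_eq_right.2 hX'
    have e2 : range d \ (range d \ Y) = Y := by
      rw [sdiff_sdiff_self_left]
      exact inf_eq_right.2 hY'
    rw [← e1, ← e2, hxy]
  have hdisjFE : Disjoint F (E.image fun Z => (range d) \ Z) := by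
    rw [disjoint_right]
    intro W hW hWF
    rw [mem_image] at hW
    obtain ⟨Z, hZ, rfl⟩ := hW
    exact hsep Z hZ hWF
  have hFP : F ⊆ powerset (range d) := fun X hX => mem_powerset.2 (hGF _ hX)
  have hEP : (E.image fun Z => (range d) \ Z) ⊆ powerset (range d) := by
    intro W hW
    rw [mem_image] at hW
    obtain ⟨Z, _, rfl⟩ := hW
    exact mem_powerset.2 (sdiff_subset)
  have hcount : F.card + E.card ≤ 2 ^ d := by
    have h1 := card_le_card (union_subset hFP hEP)
    rw [card_union_of_disjoint hdisjFE, card_powerset, card_range,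
      card_image_of_injOn hinj] at h1
    exact h1
  have hcompl := sum_choose_compl (show t ≤ d by omega)
  rw [hidx] at hcardF
  omega

end Klei

open Klei

theorem stmt_3 {d t : ℕ} (A : Finset (Fin d → Bool))
    (hdiam : ∀ x ∈ A, ∀ y ∈ A, hammingDist x y ≤ 2 * t)
    (ht : 2 * t ≤ d - 1) (hd : 1 ≤ d) :
    A.card ≤ ∑ i ∈ Finset.range (t + 1), d.choose i := by
  classical
  set g : (Fin d → Bool) → Finset ℕ :=
    fun x => (univ.filter (fun i => x i = true)).image Fin.val with hgdef
  have hkey : ∀ x y : Fin d → Bool, (symmDiff (g x) (g y)).card = hammingDist x y := by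
    intro x y
    rw [hgdef]
    dsimp only
    rw [← image_symmDiff _ _ Fin.val_injective]
    rw [card_image_of_injective _ Fin.val_injective]
    have : symmDiff (univ.filter (fun i => x i = true)) (univ.filter (fun i => y i = true))
        = univ.filter (fun i => x i ≠ y i) := by
      ext i
      rw [mem_symmDiff]
      simp only [mem_filter, mem_univ, true_and]
      cases hx : x i <;> cases hy : y i <;> simp
    rw [this]
    rfl
  have hginj : Function.Injective g := by
    intro x y hxy
    funext i
    have := hkey x y
    rw [hxy] at this
    simp only [symmDiff_self] at this
    have h0 : hammingDist x y = 0 := by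
      rw [← this]
      rfl
    rw [hammingDist_eq_zero] at h0
    rw [h0]
  have hcard : (A.image g).card = A.card := card_image_of_injective _ hginj
  have hG : Grounded d (A.image g) := by
    intro X hX
    rw [mem_image] at hX
    obtain ⟨x, _, rfl⟩ := hX
    rw [hgdef]
    intro n hn
    simp only [mem_image, mem_filter, mem_univ, true_and] at hn
    obtain ⟨i, _, rfl⟩ := hn
    rw [mem_range]
    exact i.isLt
  have hdiam' : ∀ X ∈ A.image g, ∀ Y ∈ A.image g, (symmDiff X Y).card ≤ 2 * t := by
    intro X hX Y hY
    rw [mem_image] at hX hY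
    obtain ⟨x, hx, rfl⟩ := hX
    obtain ⟨y, hy, rfl⟩ := hY
    rw [hkey]
    exact hdiam x hx y hy
  have := kleitman_sets (show 2 * t + 1 ≤ d by omega) (A.image g) hG hdiam'
  omega
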